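/- Let N be a positive integer and let A, Ω be real numbers. For u(τ,x) = A·cos τ·sin(N x), the Galerkin projection identity ∫₀^{2π} ∫₀^π [ Ω² ∂²_τ u(τ,x) − ∂²_x u(τ,x) + u(τ,x)³/sin²x ] · cos τ · sin(N x) dx dτ = (π²/8)·A·(3N·A² − 4Ω² + 4N²) holds. -/

import Mathlib

open Real Set intervalIntegral Finset

lemma int_cos_mul (c : ℝ) (hc : c ≠ 0) (L : ℝ) :
    ∫ x in (0:ℝ)..L, Real.cos (c * x) = Real.sin (c * L) / c := by
  have : ∀ x ∈ Set.uIcc (0:ℝ) L, HasDerivAt (fun y => Real.sin (c*y)/c) (Real.cos (c*x)) x := by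
    intro x _
    have h : HasDerivAt (fun y => Real.sin (c*y)) (Real.cos (c*x) * c) x := by
      simpa [Function.comp_def] using (Real.hasDerivAt_sin (c*x)).comp x ((hasDerivAt_id x).const_mul c)
    simpa [mul_div_assoc, mul_div_cancel_right₀ _ hc] using h.div_const c
  rw [intervalIntegral.integral_eq_sub_of_hasDerivAt this
    ((Real.continuous_cos.comp (continuous_const.mul continuous_id)).intervalIntegrable 0 L)]
  simp

lemma int_cos_int (m : ℤ) (hm : m ≠ 0) : ∫ x in (0:ℝ)..π, Real.cos (m * x) = 0 := by
  rw [int_cos_mul m (Int.cast_ne_zero.2 hm) π, Real.sin_int_mul_pi, zero_div]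

lemma orth (j k : ℕ) :
    ∫ x in (0:ℝ)..π, Real.sin ((2*j+1) * x) * Real.sin ((2*k+1) * x)
      = if j = k then π/2 else 0 := by
  have hrw : ∀ x : ℝ, Real.sin ((2*j+1) * x) * Real.sin ((2*k+1) * x)
      = (Real.cos (((2*(j:ℝ)+1) - (2*k+1)) * x) - Real.cos (((2*(j:ℝ)+1) + (2*k+1)) * x)) / 2 := by
    intro x
    have e1 : ((2*(j:ℝ)+1) - (2*k+1)) * x = (2*(j:ℝ)+1)*x - (2*(k:ℝ)+1)*x := by ring
    have e2 : ((2*(j:ℝ)+1) + (2*k+1)) * x = (2*(j:ℝ)+1)*x + (2*(k:ℝ)+1)*x := by ring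
    rw [e1, e2, Real.cos_sub, Real.cos_add]
    ring
  rw [intervalIntegral.integral_congr (fun x _ => hrw x)]
  have hint1 : IntervalIntegrable (fun x => Real.cos (((2*(j:ℝ)+1) - (2*k+1)) * x)) MeasureTheory.volume 0 π :=
    (Real.continuous_cos.comp (continuous_const.mul continuous_id)).intervalIntegrable 0 π
  have hint2 : IntervalIntegrable (fun x => Real.cos (((2*(j:ℝ)+1) + (2*k+1)) * x)) MeasureTheory.volume 0 π :=
    (Real.continuous_cos.comp (continuous_const.mul continuous_id)).intervalIntegrable 0 π
  have hsum : ∫ x in (0:ℝ)..π, Real.cos (((2*(j:ℝ)+1) + (2*k+1)) * x) = 0 := by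
    have : ((2*(j:ℝ)+1) + (2*k+1)) = ((2*(j:ℤ)+2*k+2 : ℤ) : ℝ) := by push_cast; ring
    rw [this, int_cos_int _ (by omega)]
  rw [intervalIntegral.integral_div, intervalIntegral.integral_sub hint1 hint2, hsum, sub_zero]
  by_cases h : j = k
  · subst h
    simp only [sub_self, zero_mul, Real.cos_zero, if_pos rfl]
    rw [intervalIntegral.integral_const]
    simp
  · have : ((2*(j:ℝ)+1) - (2*k+1)) = ((2*(j:ℤ)-2*k : ℤ) : ℝ) := by push_cast; ring
    rw [this, int_cos_int _ (by omega), if_neg h, zero_div]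

lemma fejer (N : ℕ) (x : ℝ) :
    Real.sin (N*x)^2 = Real.sin x * ∑ k ∈ Finset.range N, Real.sin ((2*k+1)*x) := by
  induction N with
  | zero => simp
  | succ n ih =>
    rw [Finset.sum_range_succ, mul_add, ← ih]
    have h1 : ((n:ℝ)+1)*x = (n:ℝ)*x + x := by ring
    have h2 : (2*(n:ℝ)+1)*x = 2*((n:ℝ)*x) + x := by ring
    push_cast
    rw [h1, h2, Real.sin_add, Real.sin_add, Real.sin_two_mul, Real.cos_two_mul]
    have pa := Real.sin_sq_add_cos_sq ((n:ℝ)*x)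
    have px := Real.sin_sq_add_cos_sq x
    nlinarith [pa, px]
lemma sinzero_null : MeasureTheory.volume {x : ℝ | Real.sin x = 0} = 0 := by
  have : {x : ℝ | Real.sin x = 0} ⊆ Set.range (fun n : ℤ => (n:ℝ) * π) := by
    intro x hx
    obtain ⟨n, hn⟩ := Real.sin_eq_zero_iff.1 hx
    exact ⟨n, hn⟩
  exact MeasureTheory.measure_mono_null this (Set.Countable.measure_zero (Set.countable_range _) _)

lemma key_int (N : ℕ) :
    ∫ x in (0:ℝ)..π, Real.sin (N*x)^4 / Real.sin x ^ 2 = N * π / 2 := by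
  have hae : ∀ᵐ x : ℝ ∂MeasureTheory.volume, x ∈ Set.uIoc (0:ℝ) π →
      Real.sin (N*x)^4 / Real.sin x ^ 2
        = (∑ k ∈ Finset.range N, Real.sin ((2*k+1)*x))^2 := by
    have h0 : ∀ᵐ x : ℝ ∂MeasureTheory.volume, Real.sin x ≠ 0 := by
      rw [MeasureTheory.ae_iff]
      simp only [ne_eq, not_not]
      exact sinzero_null
    filter_upwards [h0] with x hx _
    have hs : Real.sin x ≠ 0 := hx
    have h := fejer N x
    have : Real.sin (N*x)^4 = Real.sin x ^ 2 * (∑ k ∈ Finset.range N, Real.sin ((2*k+1)*x))^2 := by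
      rw [show (4:ℕ) = 2*2 from rfl, pow_mul, h]; ring
    rw [this, mul_div_assoc]
    rw [mul_div_left_comm, div_self (pow_ne_zero 2 hx), mul_one]
  rw [intervalIntegral.integral_congr_ae hae]
  have expand : ∀ x : ℝ, (∑ k ∈ Finset.range N, Real.sin ((2*k+1)*x))^2
      = ∑ j ∈ Finset.range N, ∑ k ∈ Finset.range N,
          Real.sin ((2*j+1)*x) * Real.sin ((2*k+1)*x) := by
    intro x; rw [sq, Finset.sum_mul_sum]
  rw [intervalIntegral.integral_congr (fun x _ => expand x)]
  rw [intervalIntegral.integral_finset_sum]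
  · have : ∀ j ∈ Finset.range N, (∫ x in (0:ℝ)..π, ∑ k ∈ Finset.range N,
        Real.sin ((2*j+1)*x) * Real.sin ((2*k+1)*x)) = π/2 := by
      intro j hj
      rw [intervalIntegral.integral_finset_sum]
      · rw [Finset.sum_congr rfl (fun k _ => orth j k)]
        simp [Finset.mem_range.1 hj]
      · intro k _
        exact (((Real.continuous_sin.comp (continuous_const.mul continuous_id)).mul
          (Real.continuous_sin.comp (continuous_const.mul continuous_id))).intervalIntegrable 0 π)
    rw [Finset.sum_congr rfl this, Finset.sum_const, Finset.card_range]
    simp; ring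
  · intro j _
    exact (continuous_finset_sum _ (fun k _ =>
      (Real.continuous_sin.comp (continuous_const.mul continuous_id)).mul
      (Real.continuous_sin.comp (continuous_const.mul continuous_id)))).intervalIntegrable 0 π

lemma int_sin_sq (N : ℕ) (hN : 0 < N) :
    ∫ x in (0:ℝ)..π, Real.sin (N*x)^2 = π / 2 := by
  have hrw : ∀ x : ℝ, Real.sin ((N:ℝ)*x)^2 = 1/2 - Real.cos (2*N*x)/2 := by
    intro x
    have := Real.cos_two_mul ((N:ℝ)*x)
    have p := Real.sin_sq_add_cos_sq ((N:ℝ)*x)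
    have e : (2*(N:ℝ))*x = 2*((N:ℝ)*x) := by ring
    rw [e]
    nlinarith
  rw [intervalIntegral.integral_congr (fun x _ => hrw x)]
  have h1 : IntervalIntegrable (fun _ : ℝ => (1:ℝ)/2) MeasureTheory.volume 0 π :=
    intervalIntegrable_const
  have h2 : IntervalIntegrable (fun x : ℝ => Real.cos (2*N*x)/2) MeasureTheory.volume 0 π :=
    ((Real.continuous_cos.comp (continuous_const.mul continuous_id)).div_const 2).intervalIntegrable 0 π
  rw [intervalIntegral.integral_sub h1 h2]
  have : ∫ x in (0:ℝ)..π, Real.cos (2*N*x)/2 = 0 := by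
    rw [intervalIntegral.integral_div, int_cos_mul (2*N) (by positivity) π]
    have : (2*(N:ℝ))*π = ((2*N : ℕ) : ℝ) * π := by push_cast; ring
    rw [this, Real.sin_nat_mul_pi]; simp
  rw [this, sub_zero, intervalIntegral.integral_const]
  simp; ring
lemma int_cos_sq_2pi : ∫ τ in (0:ℝ)..(2*π), Real.cos τ ^ 2 = π := by
  rw [integral_cos_sq]
  simp [Real.sin_two_pi, Real.cos_two_pi]

lemma int_cos_pow4_2pi : ∫ τ in (0:ℝ)..(2*π), Real.cos τ ^ 4 = 3*π/4 := by
  have hrw : ∀ τ : ℝ, Real.cos τ ^ 4 = 3/8 + Real.cos (2*τ)/2 + Real.cos (4*τ)/8 := by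
    intro τ
    have h2 := Real.cos_two_mul τ
    have h4 := Real.cos_two_mul (2*τ)
    have e : (4:ℝ)*τ = 2*(2*τ) := by ring
    rw [e, h4, h2]; ring
  rw [intervalIntegral.integral_congr (fun τ _ => hrw τ)]
  have c1 : IntervalIntegrable (fun _ : ℝ => (3:ℝ)/8) MeasureTheory.volume 0 (2*π) :=
    intervalIntegrable_const
  have c2 : IntervalIntegrable (fun τ : ℝ => Real.cos (2*τ)/2) MeasureTheory.volume 0 (2*π) :=
    ((Real.continuous_cos.comp (continuous_const.mul continuous_id)).div_const 2).intervalIntegrable _ _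
  have c3 : IntervalIntegrable (fun τ : ℝ => Real.cos (4*τ)/8) MeasureTheory.volume 0 (2*π) :=
    ((Real.continuous_cos.comp (continuous_const.mul continuous_id)).div_const 8).intervalIntegrable _ _
  rw [intervalIntegral.integral_add (c1.add c2) c3, intervalIntegral.integral_add c1 c2]
  have i2 : ∫ τ in (0:ℝ)..(2*π), Real.cos (2*τ)/2 = 0 := by
    rw [intervalIntegral.integral_div, int_cos_mul 2 two_ne_zero]
    have : (2:ℝ)*(2*π) = ((4:ℕ):ℝ)*π := by push_cast; ring
    rw [this, Real.sin_nat_mul_pi]; simp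
  have i3 : ∫ τ in (0:ℝ)..(2*π), Real.cos (4*τ)/8 = 0 := by
    rw [intervalIntegral.integral_div, int_cos_mul 4 four_ne_zero]
    have : (4:ℝ)*(2*π) = ((8:ℕ):ℝ)*π := by push_cast; ring
    rw [this, Real.sin_nat_mul_pi]; simp
  rw [i2, i3, intervalIntegral.integral_const]
  simp; ring

lemma deriv2_t (A c τ : ℝ) :
    deriv (deriv (fun t => A * Real.cos t * c)) τ = -(A * Real.cos τ * c) := by
  have e : (fun t => A * Real.cos t * c) = fun t => (A*c) * Real.cos t := by
    funext t; ring
  have h1 : deriv (fun t : ℝ => (A*c) * Real.cos t) = fun t => (A*c) * (-Real.sin t) := by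
    funext t
    rw [deriv_const_mul_field]
    simp
  rw [e, h1]
  have h2 : (fun t : ℝ => (A*c) * (-Real.sin t)) = fun t => (-(A*c)) * Real.sin t := by
    funext t; ring
  rw [h2, deriv_const_mul_field]
  simp [Real.deriv_sin]
  ring

lemma deriv2_x (b : ℝ) (N : ℕ) (x : ℝ) :
    deriv (deriv (fun y => b * Real.sin ((N:ℝ) * y))) x = -(b * (N:ℝ)^2 * Real.sin (N*x)) := by
  have hs : ∀ y : ℝ, HasDerivAt (fun y => b * Real.sin ((N:ℝ)*y)) (b * ((N:ℝ) * Real.cos ((N:ℝ)*y))) y := by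
    intro y
    have : HasDerivAt (fun y => Real.sin ((N:ℝ)*y)) (Real.cos ((N:ℝ)*y) * (N:ℝ)) y := by
      simpa [Function.comp_def] using (Real.hasDerivAt_sin ((N:ℝ)*y)).comp y ((hasDerivAt_id y).const_mul (N:ℝ))
    simpa [mul_comm, mul_assoc, mul_left_comm] using this.const_mul b
  have h1 : deriv (fun y => b * Real.sin ((N:ℝ)*y)) = fun y => (b * (N:ℝ)) * Real.cos ((N:ℝ)*y) := by
    funext y
    rw [(hs y).deriv]; ring
  rw [h1]
  have hc : HasDerivAt (fun y => (b*(N:ℝ)) * Real.cos ((N:ℝ)*y)) ((b*(N:ℝ)) * (-Real.sin ((N:ℝ)*x) * (N:ℝ))) x := by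
    have : HasDerivAt (fun y => Real.cos ((N:ℝ)*y)) (-Real.sin ((N:ℝ)*x) * (N:ℝ)) x := by
      simpa [Function.comp_def] using (Real.hasDerivAt_cos ((N:ℝ)*x)).comp x ((hasDerivAt_id x).const_mul (N:ℝ))
    exact this.const_mul _
  rw [hc.deriv]; ring

lemma v_intable (N : ℕ) :
    IntervalIntegrable (fun x => Real.sin ((N:ℝ)*x)^4 / Real.sin x^2) MeasureTheory.volume 0 π := by
  rw [intervalIntegrable_iff_integrableOn_Ioc_of_le Real.pi_pos.le]
  have hS : MeasureTheory.IntegrableOn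
      (fun x => (∑ k ∈ Finset.range N, Real.sin ((2*k+1)*x))^2) (Set.Ioc (0:ℝ) π) := by
    exact ((continuous_finset_sum _ (fun k _ =>
      Real.continuous_sin.comp (continuous_const.mul continuous_id))).pow 2).integrableOn_Ioc
  refine hS.congr ?_
  have h0 : ∀ᵐ x : ℝ ∂MeasureTheory.volume, Real.sin x ≠ 0 := by
    rw [MeasureTheory.ae_iff]
    simp only [ne_eq, not_not]
    exact sinzero_null
  refine MeasureTheory.ae_restrict_of_ae ?_
  filter_upwards [h0] with x hx
  have h := fejer N x
  have : Real.sin ((N:ℝ)*x)^4 = Real.sin x ^ 2 * (∑ k ∈ Finset.range N, Real.sin ((2*k+1)*x))^2 := by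
    rw [show (4:ℕ) = 2*2 from rfl, pow_mul, h]; ring
  rw [this, mul_div_assoc]
  rw [mul_div_left_comm, div_self (pow_ne_zero 2 hx), mul_one]

/-- the one-mode Galerkin projection identity. -/
theorem one_mode_galerkin (N : ℕ) (hN : 0 < N) (A Ω : ℝ) :
    (∫ τ in (0:ℝ)..(2 * π), ∫ x in (0:ℝ)..π,
        (Ω ^ 2 * deriv (deriv (fun t => A * Real.cos t * Real.sin (N * x))) τ
          - deriv (deriv (fun y => A * Real.cos τ * Real.sin (N * y))) x
          + (A * Real.cos τ * Real.sin (N * x)) ^ 3 / (Real.sin x) ^ 2)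
        * Real.cos τ * Real.sin (N * x))
      = (π ^ 2 / 8) * A * (3 * N * A ^ 2 - 4 * Ω ^ 2 + 4 * N ^ 2) := by
  have inner : ∀ τ : ℝ, (∫ x in (0:ℝ)..π,
        (Ω ^ 2 * deriv (deriv (fun t => A * Real.cos t * Real.sin (N * x))) τ
          - deriv (deriv (fun y => A * Real.cos τ * Real.sin (N * y))) x
          + (A * Real.cos τ * Real.sin (N * x)) ^ 3 / (Real.sin x) ^ 2)
        * Real.cos τ * Real.sin (N * x))
      = ((N:ℝ)^2 - Ω^2) * A * Real.cos τ ^ 2 * (π/2)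
        + A^3 * Real.cos τ ^ 4 * ((N:ℝ) * π / 2) := by
    intro τ
    have hrw : ∀ x : ℝ,
        (Ω ^ 2 * deriv (deriv (fun t => A * Real.cos t * Real.sin (N * x))) τ
          - deriv (deriv (fun y => A * Real.cos τ * Real.sin (N * y))) x
          + (A * Real.cos τ * Real.sin (N * x)) ^ 3 / (Real.sin x) ^ 2)
        * Real.cos τ * Real.sin (N * x)
        = ((N:ℝ)^2 - Ω^2) * A * Real.cos τ ^ 2 * Real.sin ((N:ℝ)*x) ^ 2
          + A^3 * Real.cos τ ^ 4 * (Real.sin ((N:ℝ)*x)^4 / Real.sin x ^ 2) := by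
      intro x
      rw [deriv2_t A (Real.sin ((N:ℝ)*x)) τ, deriv2_x (A * Real.cos τ) N x]
      ring
    rw [intervalIntegral.integral_congr (fun x _ => hrw x)]
    have i1 : IntervalIntegrable
        (fun x => ((N:ℝ)^2 - Ω^2) * A * Real.cos τ ^ 2 * Real.sin ((N:ℝ)*x) ^ 2)
        MeasureTheory.volume 0 π :=
      (Continuous.intervalIntegrable (by continuity) 0 π)
    have i2 : IntervalIntegrable
        (fun x => A^3 * Real.cos τ ^ 4 * (Real.sin ((N:ℝ)*x)^4 / Real.sin x ^ 2))
        MeasureTheory.volume 0 π := (v_intable N).const_mul _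
    rw [intervalIntegral.integral_add i1 i2, intervalIntegral.integral_const_mul,
      intervalIntegral.integral_const_mul, int_sin_sq N hN, key_int N]
  rw [intervalIntegral.integral_congr (fun τ _ => inner τ)]
  have j1 : IntervalIntegrable
      (fun τ => ((N:ℝ)^2 - Ω^2) * A * Real.cos τ ^ 2 * (π/2)) MeasureTheory.volume 0 (2*π) :=
    (Continuous.intervalIntegrable (by continuity) 0 (2*π))
  have j2 : IntervalIntegrable
      (fun τ => A^3 * Real.cos τ ^ 4 * ((N:ℝ) * π / 2)) MeasureTheory.volume 0 (2*π) :=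
    (Continuous.intervalIntegrable (by continuity) 0 (2*π))
  rw [intervalIntegral.integral_add j1 j2]
  have e1 : (∫ τ in (0:ℝ)..(2*π), ((N:ℝ)^2 - Ω^2) * A * Real.cos τ ^ 2 * (π/2))
      = ((N:ℝ)^2 - Ω^2) * A * π * (π/2) := by
    have : (fun τ => ((N:ℝ)^2 - Ω^2) * A * Real.cos τ ^ 2 * (π/2))
        = fun τ => (((N:ℝ)^2 - Ω^2) * A * (π/2)) * Real.cos τ ^ 2 := by
      funext τ; ring
    rw [this, intervalIntegral.integral_const_mul, int_cos_sq_2pi]; ring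
  have e2 : (∫ τ in (0:ℝ)..(2*π), A^3 * Real.cos τ ^ 4 * ((N:ℝ) * π / 2))
      = A^3 * (3*π/4) * ((N:ℝ) * π / 2) := by
    have : (fun τ => A^3 * Real.cos τ ^ 4 * ((N:ℝ) * π / 2))
        = fun τ => (A^3 * ((N:ℝ) * π / 2)) * Real.cos τ ^ 4 := by
      funext τ; ring
    rw [this, intervalIntegral.integral_const_mul, int_cos_pow4_2pi]; ring
  rw [e1, e2]
  ring
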